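/- arXiv:1308.5055 — 3 statements merged into one kernel-verified Lean document; each statement's English description precedes it below -/
import Mathlib

section
/- Let 0 < ρ < 1, let I be a bounded interval and A ⊆ I a measurable subset with Lebesgue measure |A| ≥ ρ|I|. Then for every polynomial Q of degree at most k-1 there is a constant c depending only on k and ρ such that sup_{t ∈ I} |Q(t)| ≤ c · sup_{t ∈ A} |Q(t)|. -/
open MeasureTheory

/-- Remez-type inequality: a polynomial of degree `< k` on an interval `I` is
controlled by its sup on a subset `A ⊆ I` of measure at least `ρ|I|`. -/
theorem remez_sup_bound (k : ℕ) (ρ : ℝ) (hρ0 : 0 < ρ) (hρ1 : ρ < 1) :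
    ∃ c : ℝ, 0 < c ∧ ∀ (a b : ℝ), a < b → ∀ A : Set ℝ, A ⊆ Set.Icc a b →
      MeasurableSet A → ENNReal.ofReal (ρ * (b - a)) ≤ volume A →
      ∀ Q : Polynomial ℝ, Q.degree < k →
        ∀ t ∈ Set.Icc a b, |Q.eval t| ≤ c * sSup ((fun s => |Q.eval s|) '' A) := by
  refine ⟨(k + 1) * (2 * k / ρ + 1) ^ k, by positivity, ?_⟩
  intro a b hab A hA hAm hAv Q hQ t ht
  set m : ℝ := ρ * (b - a) with hm
  have hba : 0 < b - a := by linarith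
  have hm0 : 0 < m := by positivity
  set F : ℝ → ℝ := fun u => (volume (A ∩ Set.Icc a u)).toReal with hFdef
  have hfin : ∀ s : Set ℝ, s ⊆ Set.Icc a b → volume s ≠ ⊤ := by
    intro s hs
    exact ne_of_lt (lt_of_le_of_lt (measure_mono hs)
      (by rw [Real.volume_Icc]; exact ENNReal.ofReal_lt_top))
  have hsub : ∀ u : ℝ, A ∩ Set.Icc a u ⊆ Set.Icc a b :=
    fun u => Set.inter_subset_left.trans hA
  have hmono : Monotone F := by
    intro u v huv
    exact ENNReal.toReal_mono (hfin _ (hsub v))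
      (measure_mono (Set.inter_subset_inter_right _ (Set.Icc_subset_Icc_right huv)))
  have hlip : ∀ u v : ℝ, u ≤ v → F v ≤ F u + (v - u) := by
    intro u v huv
    have hss : A ∩ Set.Icc a v ⊆ (A ∩ Set.Icc a u) ∪ Set.Ioc u v := by
      rintro y ⟨hyA, hya, hyv⟩
      by_cases hy : y ≤ u
      · exact Or.inl ⟨hyA, hya, hy⟩
      · exact Or.inr ⟨lt_of_not_ge hy, hyv⟩
    have hIoc : volume (Set.Ioc u v) ≠ ⊤ := by simp [Real.volume_Ioc]
    have hfin2 : volume (A ∩ Set.Icc a u) + volume (Set.Ioc u v) ≠ ⊤ :=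
      ENNReal.add_ne_top.mpr ⟨hfin _ (hsub u), hIoc⟩
    have h1 : volume (A ∩ Set.Icc a v) ≤ volume (A ∩ Set.Icc a u) + volume (Set.Ioc u v) :=
      le_trans (measure_mono hss) (measure_union_le _ _)
    calc F v ≤ (volume (A ∩ Set.Icc a u) + volume (Set.Ioc u v)).toReal :=
          ENNReal.toReal_mono hfin2 h1
      _ = F u + (v - u) := by
          rw [ENNReal.toReal_add (hfin _ (hsub u)) hIoc, Real.volume_Ioc,
            ENNReal.toReal_ofReal (by linarith)]
  have hcont : Continuous F := by
    refine (LipschitzWith.of_dist_le_mul (K := 1) ?_).continuous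
    intro u v
    rw [Real.dist_eq, Real.dist_eq, NNReal.coe_one, one_mul]
    rcases le_total u v with h | h
    · have h1 := hmono h
      have h2 := hlip u v h
      rw [abs_of_nonpos (by linarith), abs_of_nonpos (by linarith)]
      linarith
    · have h1 := hmono h
      have h2 := hlip v u h
      rw [abs_of_nonneg (by linarith), abs_of_nonneg (by linarith)]
      linarith
  have hFa : F a = 0 := by
    have h0 : volume (A ∩ Set.Icc a a) = 0 :=
      measure_mono_null (by rw [Set.Icc_self]; exact Set.inter_subset_right)
        Real.volume_singleton
    simp only [hFdef]
    rw [h0, ENNReal.toReal_zero]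
  have hFb : m ≤ F b := by
    have hAb : A ∩ Set.Icc a b = A := Set.inter_eq_left.mpr hA
    have h := ENNReal.toReal_mono (hfin A hA) hAv
    rw [ENNReal.toReal_ofReal hm0.le] at h
    simpa [hFdef, hAb] using h
  -- selection lemma
  have hsel : ∀ α β : ℝ, 0 ≤ α → α < β → β ≤ F b → ∃ y ∈ A, α ≤ F y ∧ F y ≤ β := by
    intro α β hα hαβ hβ
    obtain ⟨v, hv, hFv⟩ := intermediate_value_Icc hab.le hcont.continuousOn
      (show β ∈ Set.Icc (F a) (F b) by rw [Set.mem_Icc, hFa]; exact ⟨by linarith, hβ⟩)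
    obtain ⟨u, hu, hFu⟩ := intermediate_value_Icc hv.1 hcont.continuousOn
      (show α ∈ Set.Icc (F a) (F v) by rw [Set.mem_Icc, hFa, hFv]; exact ⟨hα, hαβ.le⟩)
    have hdisj : Disjoint (A ∩ Set.Icc a u) (A ∩ Set.Ioc u v) := by
      rw [Set.disjoint_left]
      rintro y ⟨-, -, hy1⟩ ⟨-, hy2, -⟩
      exact absurd hy1 (not_le.mpr hy2)
    have hsplit : A ∩ Set.Icc a v = (A ∩ Set.Icc a u) ∪ (A ∩ Set.Ioc u v) := by
      rw [← Set.inter_union_distrib_left, Set.Icc_union_Ioc_eq_Icc hu.1 hu.2]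
    have hmu : volume (A ∩ Set.Icc a v)
        = volume (A ∩ Set.Icc a u) + volume (A ∩ Set.Ioc u v) := by
      rw [hsplit, measure_union hdisj (hAm.inter measurableSet_Ioc)]
    have hIocfin : volume (A ∩ Set.Ioc u v) ≠ ⊤ := hfin _ (Set.inter_subset_left.trans hA)
    have htr : F v = F u + (volume (A ∩ Set.Ioc u v)).toReal := by
      rw [hFdef]; simp only
      rw [hmu, ENNReal.toReal_add (hfin _ (hsub u)) hIocfin]
    have hpos : volume (A ∩ Set.Ioc u v) ≠ 0 := by
      intro h0
      rw [h0, ENNReal.toReal_zero] at htr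
      rw [hFu, hFv] at htr
      linarith
    obtain ⟨y, hyA, hy⟩ := nonempty_of_measure_ne_zero hpos
    refine ⟨y, hyA, ?_, ?_⟩
    · rw [← hFu]; exact hmono hy.1.le
    · rw [← hFv]; exact hmono hy.2
  set δ : ℝ := m / (2 * k) with hδdef
  have hx : ∀ i : Fin k, ∃ y ∈ A, 2 * i * δ ≤ F y ∧ F y ≤ (2 * i + 1) * δ := by
    intro i
    have hk0 : 0 < (k : ℝ) := by exact_mod_cast i.pos
    have hδ : 0 < δ := by rw [hδdef]; positivity
    have hik : (i : ℝ) + 1 ≤ (k : ℝ) := by exact_mod_cast i.isLt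
    refine hsel _ _ (by positivity)
      (by have h : (2 * (i : ℝ) + 1) * δ = 2 * i * δ + δ := by ring
          linarith) ?_
    have h2k : 2 * (k : ℝ) * δ = m := by
      rw [hδdef]; field_simp
    have h3 : (2 * (i : ℝ) + 1) * δ ≤ 2 * (k : ℝ) * δ :=
      mul_le_mul_of_nonneg_right (by linarith) hδ.le
    linarith
  choose x hxA hxl hxu using hx
  have hsep : ∀ i j : Fin k, (i : ℕ) < (j : ℕ) → δ ≤ x j - x i := by
    intro i j hij
    have hk0 : 0 < (k : ℝ) := by exact_mod_cast i.pos
    have hδ : 0 < δ := by rw [hδdef]; positivity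
    have hij' : (i : ℝ) + 1 ≤ (j : ℝ) := by exact_mod_cast hij
    have h1 := hxu i
    have h2 := hxl j
    have hFlt : F (x i) < F (x j) := by nlinarith
    have hle : x i ≤ x j := by
      by_contra h
      exact absurd (hmono (le_of_not_ge h)) (not_le.mpr hFlt)
    have h3 := hlip (x i) (x j) hle
    nlinarith
  have habs : ∀ i j : Fin k, i ≠ j → δ ≤ |x i - x j| := by
    intro i j hne
    have hk0 : 0 < (k : ℝ) := by exact_mod_cast i.pos
    have hδ : 0 < δ := by rw [hδdef]; positivity
    rcases lt_or_gt_of_ne (fun h : (i : ℕ) = (j : ℕ) => hne (Fin.ext h)) with h | h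
    · rw [abs_sub_comm, abs_of_nonneg (by linarith [hsep i j h])]
      linarith [hsep i j h]
    · rw [abs_of_nonneg (by linarith [hsep j i h])]
      linarith [hsep j i h]
  have hδ0 : ∀ _ : Fin k, 0 < δ := by
    intro i
    have hk0 : 0 < (k : ℝ) := by exact_mod_cast i.pos
    rw [hδdef]; positivity
  have hinj : Set.InjOn x ↑(Finset.univ : Finset (Fin k)) := by
    intro i _ j _ hij
    by_contra hne
    have := habs i j hne
    rw [hij, sub_self, abs_zero] at this
    exact absurd this (not_le.mpr (hδ0 i))
  set S : ℝ := sSup ((fun s => |Q.eval s|) '' A) with hSdef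
  have hbdd : BddAbove ((fun s => |Q.eval s|) '' A) := by
    have hc : ContinuousOn (fun s => |Q.eval s|) (Set.Icc a b) :=
      ((Polynomial.continuous Q).abs).continuousOn
    exact (isCompact_Icc.bddAbove_image hc).mono (Set.image_mono hA)
  have hS0 : 0 ≤ S := Real.sSup_nonneg (by rintro y ⟨z, -, rfl⟩; exact abs_nonneg _)
  have hSle : ∀ i : Fin k, |Q.eval (x i)| ≤ S :=
    fun i => le_csSup hbdd ⟨x i, hxA i, rfl⟩
  have hcard : (Finset.univ : Finset (Fin k)).card = k := by simp
  have hdeg : Q.degree < (Finset.univ : Finset (Fin k)).card := by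
    rw [hcard]; exact hQ
  have hQi := Lagrange.eq_interpolate hinj hdeg
  have heval : Q.eval t
      = ∑ i : Fin k, Q.eval (x i) * Polynomial.eval t (Lagrange.basis Finset.univ x i) := by
    conv_lhs => rw [hQi]
    rw [Lagrange.interpolate_apply, Polynomial.eval_finset_sum]
    simp [Polynomial.eval_mul]
  have hbound : ∀ i : Fin k,
      |Polynomial.eval t (Lagrange.basis Finset.univ x i)| ≤ (2 * k / ρ + 1) ^ k := by
    intro i
    have hk0 : 0 < (k : ℝ) := by exact_mod_cast i.pos
    have hδ : 0 < δ := hδ0 i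
    have hBρ : (b - a) / δ = 2 * k / ρ := by
      rw [hδdef, hm]; field_simp
    have hB1 : (1 : ℝ) ≤ 2 * k / ρ + 1 := by
      have : (0:ℝ) ≤ 2 * k / ρ := by positivity
      linarith
    rw [Lagrange.basis, Polynomial.eval_prod, Finset.abs_prod]
    calc ∏ j ∈ Finset.univ.erase i, |Polynomial.eval t (Lagrange.basisDivisor (x i) (x j))|
        ≤ ∏ _j ∈ Finset.univ.erase i, (2 * k / ρ + 1) := by
          refine Finset.prod_le_prod (fun _ _ => abs_nonneg _) ?_
          intro j hj
          have hji : j ≠ i := (Finset.mem_erase.mp hj).1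
          have hev : Polynomial.eval t (Lagrange.basisDivisor (x i) (x j))
              = (x i - x j)⁻¹ * (t - x j) := by
            simp [Lagrange.basisDivisor]
          have htj : |t - x j| ≤ b - a := by
            have h1 := hA (hxA j)
            rw [Set.mem_Icc] at h1 ht
            rw [abs_le]; constructor <;> linarith [h1.1, h1.2, ht.1, ht.2]
          have hij : δ ≤ |x i - x j| := habs i j (Ne.symm hji)
          rw [hev, abs_mul, abs_inv, inv_mul_eq_div]
          calc |t - x j| / |x i - x j| ≤ (b - a) / δ :=
                div_le_div₀ (by linarith) htj hδ hij
            _ = 2 * k / ρ := hBρ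
            _ ≤ 2 * k / ρ + 1 := by linarith
      _ = (2 * k / ρ + 1) ^ (Finset.univ.erase i).card := by rw [Finset.prod_const]
      _ ≤ (2 * k / ρ + 1) ^ k := by
          refine pow_le_pow_right₀ hB1 ?_
          calc (Finset.univ.erase i).card ≤ (Finset.univ : Finset (Fin k)).card :=
                Finset.card_le_card (Finset.erase_subset _ _)
            _ = k := hcard
  have hBk : (0 : ℝ) ≤ (2 * k / ρ + 1) ^ k := by positivity
  calc |Q.eval t|
      = |∑ i : Fin k, Q.eval (x i) * Polynomial.eval t (Lagrange.basis Finset.univ x i)| := by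
        rw [heval]
    _ ≤ ∑ i : Fin k, |Q.eval (x i) * Polynomial.eval t (Lagrange.basis Finset.univ x i)| :=
        Finset.abs_sum_le_sum_abs _ _
    _ ≤ ∑ _i : Fin k, S * (2 * k / ρ + 1) ^ k := by
        refine Finset.sum_le_sum fun i _ => ?_
        rw [abs_mul]
        exact mul_le_mul (hSle i) (hbound i) (abs_nonneg _) hS0
    _ = k * (S * (2 * k / ρ + 1) ^ k) := by
        rw [Finset.sum_const, hcard, nsmul_eq_mul]
    _ ≤ (k + 1) * (2 * k / ρ + 1) ^ k * S := by nlinarith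
end

section
/- Let 0 < ρ < 1, let I be a bounded interval and A ⊆ I a measurable subset with |A| ≥ ρ|I|. Then for every polynomial Q of degree at most k-1, ∫_I |Q(t)| dt ≤ c · ∫_A |Q(t)| dt, where c depends only on k and ρ. -/
open MeasureTheory

noncomputable def remP (k : ℕ) (v : Fin k → ℝ) (t : ℝ) : ℝ := ∑ i, v i * t ^ (i : ℕ)

lemma remP_cont (k : ℕ) (v : Fin k → ℝ) : Continuous (remP k v) := by
  unfold remP
  exact continuous_finset_sum _ fun i _ => continuous_const.mul (continuous_pow _)

lemma remP_integrableOn (k : ℕ) (v : Fin k → ℝ) {A : Set ℝ} (hA : A ⊆ Set.Icc 0 1) :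
    IntegrableOn (fun t => |remP k v t|) A := by
  exact ((remP_cont k v).abs.integrableOn_Icc (a := (0:ℝ)) (b := 1)).mono_set hA

lemma remP_bound (k : ℕ) (v : Fin k → ℝ) {t : ℝ} (ht : t ∈ Set.Icc (0:ℝ) 1) :
    |remP k v t| ≤ k * ‖v‖ := by
  calc |remP k v t| ≤ ∑ i, |v i * t ^ (i : ℕ)| := Finset.abs_sum_le_sum_abs _ _
    _ ≤ ∑ _i : Fin k, ‖v‖ := by
        refine Finset.sum_le_sum fun i _ => ?_
        rw [abs_mul, abs_pow]
        have h1 : |v i| ≤ ‖v‖ := by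
          simpa [Real.norm_eq_abs] using norm_le_pi_norm v i
        have h2 : |t| ^ (i : ℕ) ≤ 1 := by
          apply pow_le_one₀ (abs_nonneg _)
          rw [abs_of_nonneg ht.1]; exact ht.2
        calc |v i| * |t| ^ (i : ℕ) ≤ |v i| * 1 := by
              exact mul_le_mul_of_nonneg_left h2 (abs_nonneg _)
          _ ≤ ‖v‖ := by simpa using h1
    _ = k * ‖v‖ := by simp [Finset.sum_const, nsmul_eq_mul]

lemma remP_sub (k : ℕ) (v w : Fin k → ℝ) (t : ℝ) :
    remP k v t - remP k w t = remP k (v - w) t := by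
  simp [remP, sub_mul, Finset.sum_sub_distrib]

def remAdm (ρ : ℝ) (A : Set ℝ) : Prop :=
  MeasurableSet A ∧ A ⊆ Set.Icc 0 1 ∧ ENNReal.ofReal ρ ≤ volume A

noncomputable def remF (k : ℕ) (ρ : ℝ) (v : Fin k → ℝ) : ℝ :=
  ⨅ A : {A : Set ℝ // remAdm ρ A}, ∫ t in A.1, |remP k v t|

lemma remF_bdd (k : ℕ) (ρ : ℝ) (v : Fin k → ℝ) :
    BddBelow (Set.range fun A : {A : Set ℝ // remAdm ρ A} => ∫ t in A.1, |remP k v t|) := by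
  refine ⟨0, ?_⟩
  rintro x ⟨A, rfl⟩
  exact integral_nonneg fun t => abs_nonneg _

lemma remF_le (k : ℕ) (ρ : ℝ) (v : Fin k → ℝ) {A : Set ℝ} (hA : remAdm ρ A) :
    remF k ρ v ≤ ∫ t in A, |remP k v t| :=
  ciInf_le (remF_bdd k ρ v) ⟨A, hA⟩

lemma remAdm_Icc {ρ : ℝ} (hρ1 : ρ ≤ 1) : remAdm ρ (Set.Icc 0 1) := by
  refine ⟨measurableSet_Icc, le_refl _, ?_⟩
  rw [Real.volume_Icc]
  exact ENNReal.ofReal_le_ofReal (by linarith)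

lemma le_remF (k : ℕ) (ρ : ℝ) (hρ1 : ρ ≤ 1) (v : Fin k → ℝ) {c : ℝ}
    (h : ∀ A : Set ℝ, remAdm ρ A → c ≤ ∫ t in A, |remP k v t|) : c ≤ remF k ρ v := by
  haveI : Nonempty {A : Set ℝ // remAdm ρ A} := ⟨⟨Set.Icc 0 1, remAdm_Icc hρ1⟩⟩
  exact le_ciInf fun A => h A.1 A.2

lemma rem_integral_est (k : ℕ) (ρ : ℝ) (v w : Fin k → ℝ) {A : Set ℝ} (hA : remAdm ρ A) :
    ∫ t in A, |remP k v t| ≤ (∫ t in A, |remP k w t|) + k * ‖v - w‖ := by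
  have hvolA : volume A ≤ 1 := by
    have h := (measure_mono hA.2.1 : volume A ≤ volume (Set.Icc (0:ℝ) 1))
    rwa [Real.volume_Icc, sub_zero, ENNReal.ofReal_one] at h
  have hAfin : volume A < ⊤ := lt_of_le_of_lt hvolA (by simp)
  have hstep : ∫ t in A, |remP k v t| ≤ ∫ t in A, (|remP k w t| + k * ‖v - w‖) := by
    refine setIntegral_mono_on (remP_integrableOn k v hA.2.1)
      ((remP_integrableOn k w hA.2.1).add (integrableOn_const hAfin.ne)) hA.1 ?_
    intro t ht
    have h1 : |remP k v t| - |remP k w t| ≤ |remP k v t - remP k w t| := abs_sub_abs_le_abs_sub _ _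
    have h2 : |remP k v t - remP k w t| ≤ k * ‖v - w‖ := by
      rw [remP_sub]; exact remP_bound k (v - w) (hA.2.1 ht)
    linarith
  have hconst : ∫ _t in A, (k * ‖v - w‖ : ℝ) = (volume A).toReal * (k * ‖v - w‖) := by
    simp [setIntegral_const, measureReal_def]
  have hintadd : ∫ t in A, (|remP k w t| + k * ‖v - w‖)
      = (∫ t in A, |remP k w t|) + (volume A).toReal * (k * ‖v - w‖) := by
    rw [integral_add (remP_integrableOn k w hA.2.1) (integrableOn_const hAfin.ne)]
    rw [hconst]
  have htoReal : (volume A).toReal ≤ 1 := by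
    have := ENNReal.toReal_mono (by simp) hvolA
    simpa using this
  have : (volume A).toReal * (k * ‖v - w‖) ≤ k * ‖v - w‖ := by
    have hnn : (0:ℝ) ≤ k * ‖v - w‖ := by positivity
    nlinarith
  linarith [hstep, hintadd.le, hintadd.ge]

lemma remF_cont (k : ℕ) (ρ : ℝ) (hρ1 : ρ ≤ 1) : Continuous (remF k ρ) := by
  have key : ∀ v w : Fin k → ℝ, remF k ρ v ≤ remF k ρ w + k * ‖v - w‖ := by
    intro v w
    have : remF k ρ v - k * ‖v - w‖ ≤ remF k ρ w := by
      refine le_remF k ρ hρ1 w fun A hA => ?_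
      have h1 := remF_le k ρ v hA
      have h2 := rem_integral_est k ρ v w hA
      linarith
    linarith
  refine LipschitzWith.continuous (K := (k : NNReal)) ?_
  refine LipschitzWith.of_dist_le_mul fun v w => ?_
  rw [Real.dist_eq, abs_sub_le_iff]
  have hd : dist v w = ‖v - w‖ := dist_eq_norm v w
  have hrev : ‖w - v‖ = ‖v - w‖ := norm_sub_rev w v
  constructor
  · have := key v w; rw [hd]; push_cast; linarith
  · have := key w v; rw [hrev] at this; rw [hd]; push_cast; linarith

lemma remF_pos (k : ℕ) (ρ : ℝ) (hρ0 : 0 < ρ) (hρ1 : ρ ≤ 1) {v : Fin k → ℝ} (hv : v ≠ 0) :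
    0 < remF k ρ v := by
  classical
  -- the polynomial with coefficients v
  set q : Polynomial ℝ := ∑ i : Fin k, Polynomial.C (v i) * Polynomial.X ^ (i : ℕ) with hqdef
  have heval : ∀ t, q.eval t = remP k v t := by
    intro t
    simp [hqdef, remP, Polynomial.eval_finset_sum]
  have hq : q ≠ 0 := by
    obtain ⟨j, hj⟩ := Function.ne_iff.mp hv
    intro h0
    apply hj
    have hc := congrArg (fun p => Polynomial.coeff p (j : ℕ)) h0
    simp only [hqdef, Polynomial.finset_sum_coeff, Polynomial.coeff_C_mul,
      Polynomial.coeff_X_pow, Polynomial.coeff_zero, mul_ite, mul_one, mul_zero,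
      Fin.val_inj, Finset.sum_ite_eq, Finset.mem_univ, if_true] at hc
    simpa using hc
  have hZ : volume {t : ℝ | q.IsRoot t} = 0 :=
    (Polynomial.finite_setOf_isRoot hq).measure_zero _
  set S : ℕ → Set ℝ := fun n => Set.Icc 0 1 ∩ {t : ℝ | |remP k v t| ≤ ((n : ℝ) + 1)⁻¹} with hSdef
  have hSmeas : ∀ n, MeasurableSet (S n) := by
    intro n
    exact measurableSet_Icc.inter
      (measurableSet_le (remP_cont k v).abs.measurable measurable_const)
  have hSanti : Antitone S := by
    intro n m hnm t ht
    refine ⟨ht.1, ?_⟩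
    have h2 : |remP k v t| ≤ ((m : ℝ) + 1)⁻¹ := ht.2
    have h3 : ((m : ℝ) + 1)⁻¹ ≤ ((n : ℝ) + 1)⁻¹ := by
      apply inv_anti₀ (by positivity)
      have : (n : ℝ) ≤ m := Nat.cast_le.mpr hnm
      linarith
    exact le_trans h2 h3
  have hSint : ⋂ n, S n ⊆ {t : ℝ | q.IsRoot t} := by
    intro t ht
    simp only [Set.mem_iInter] at ht
    have h0 : |remP k v t| = 0 := by
      by_contra h
      have hpos : 0 < |remP k v t| := lt_of_le_of_ne (abs_nonneg _) (Ne.symm h)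
      obtain ⟨n, hn⟩ := exists_nat_gt (|remP k v t|)⁻¹
      have h1 : |remP k v t| ≤ ((n : ℝ) + 1)⁻¹ := (ht n).2
      have hpos2 : (0:ℝ) < (n : ℝ) + 1 := by positivity
      have hn1 : |remP k v t|⁻¹ < (n : ℝ) + 1 := by linarith
      have hmul : 1 < |remP k v t| * ((n : ℝ) + 1) := by
        have := mul_lt_mul_of_pos_left hn1 hpos
        rwa [mul_inv_cancel₀ hpos.ne'] at this
      have hx : |remP k v t| * ((n : ℝ) + 1) ≤ 1 := by
        have := mul_le_mul_of_nonneg_right h1 hpos2.le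
        rwa [inv_mul_cancel₀ hpos2.ne'] at this
      linarith
    have : remP k v t = 0 := abs_eq_zero.mp h0
    simpa [Polynomial.IsRoot, heval] using this
  have hlim : Filter.Tendsto (fun n => volume (S n)) Filter.atTop (nhds (volume (⋂ n, S n))) :=
    tendsto_measure_iInter_atTop (fun n => (hSmeas n).nullMeasurableSet) hSanti
      ⟨0, by
        refine ne_of_lt (lt_of_le_of_lt (measure_mono Set.inter_subset_left) ?_)
        rw [Real.volume_Icc]; simp⟩
  have hz : volume (⋂ n, S n) = 0 := measure_mono_null hSint hZ
  rw [hz] at hlim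
  have hev : ∀ᶠ n in Filter.atTop, volume (S n) < ENNReal.ofReal (ρ / 2) :=
    hlim.eventually_lt_const (by simp [ENNReal.ofReal_pos]; linarith)
  obtain ⟨n, hn⟩ := hev.exists
  set ε : ℝ := ((n : ℝ) + 1)⁻¹ with hεdef
  have hε : 0 < ε := by positivity
  have hkey : ∀ A : Set ℝ, remAdm ρ A → ε * (ρ / 2) ≤ ∫ t in A, |remP k v t| := by
    intro A hA
    set B : Set ℝ := A \ S n with hBdef
    have hBmeas : MeasurableSet B := hA.1.diff (hSmeas n)
    have hBsub : B ⊆ Set.Icc 0 1 := Set.diff_subset.trans hA.2.1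
    have hBfin : volume B ≠ ⊤ := by
      refine ne_of_lt (lt_of_le_of_lt (measure_mono hBsub) ?_)
      rw [Real.volume_Icc]; simp
    have hBvol : ENNReal.ofReal (ρ / 2) ≤ volume B := by
      have hsub : A ⊆ B ∪ S n := by
        rw [hBdef, Set.diff_union_self]; exact Set.subset_union_left
      have h1 : volume A ≤ volume B + volume (S n) :=
        le_trans (measure_mono hsub) (measure_union_le _ _)
      have h2 : ENNReal.ofReal ρ ≤ volume B + ENNReal.ofReal (ρ / 2) := by
        refine le_trans hA.2.2 (le_trans h1 ?_)
        exact add_le_add_right hn.le _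
      have h3 : ENNReal.ofReal ρ = ENNReal.ofReal (ρ / 2) + ENNReal.ofReal (ρ / 2) := by
        rw [← ENNReal.ofReal_add (by linarith) (by linarith)]
        norm_num
      rw [h3] at h2
      exact (ENNReal.add_le_add_iff_right ENNReal.ofReal_ne_top).mp h2
    have hpt : ∀ t ∈ B, ε ≤ |remP k v t| := by
      intro t ht
      have htIcc : t ∈ Set.Icc (0:ℝ) 1 := hA.2.1 ht.1
      have : ¬ (|remP k v t| ≤ ε) := by
        intro hcon
        exact ht.2 ⟨htIcc, hcon⟩
      linarith [not_le.mp this]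
    have h4 : ε * (volume B).toReal ≤ ∫ t in B, |remP k v t| :=
      setIntegral_ge_of_const_le_real hBmeas hBfin hpt (remP_integrableOn k v hBsub)
    have h5 : ∫ t in B, |remP k v t| ≤ ∫ t in A, |remP k v t| := by
      refine setIntegral_mono_set (remP_integrableOn k v hA.2.1)
        (Filter.Eventually.of_forall fun t => abs_nonneg _) ?_
      exact HasSubset.Subset.eventuallyLE Set.diff_subset
    have h6 : ρ / 2 ≤ (volume B).toReal :=
      (ENNReal.ofReal_le_iff_le_toReal hBfin).mp hBvol
    have h7 : ε * (ρ / 2) ≤ ε * (volume B).toReal :=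
      mul_le_mul_of_nonneg_left h6 hε.le
    linarith
  have := le_remF k ρ hρ1 v hkey
  have hpos : 0 < ε * (ρ / 2) := by positivity
  linarith

lemma remez_unit (k : ℕ) (ρ : ℝ) (hρ0 : 0 < ρ) (hρ1 : ρ < 1) :
    ∃ c : ℝ, 0 < c ∧ ∀ A : Set ℝ, A ⊆ Set.Icc 0 1 → MeasurableSet A →
      ENNReal.ofReal ρ ≤ volume A → ∀ Q : Polynomial ℝ, Q.degree < k →
      ∫ t in Set.Icc (0:ℝ) 1, |Q.eval t| ≤ c * ∫ t in A, |Q.eval t| := by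
  rcases Nat.eq_zero_or_pos k with hk | hk
  · refine ⟨1, one_pos, ?_⟩
    intro A hsub hmeas hvol Q hdeg
    subst hk
    have : Q = 0 := by
      have : Q.degree < 0 := by simpa using hdeg
      exact Polynomial.degree_eq_bot.mp (Nat.WithBot.lt_zero_iff.mp this)
    simp [this]
  · haveI : Nonempty (Fin k) := ⟨⟨0, hk⟩⟩
    have hsph : IsCompact (Metric.sphere (0 : Fin k → ℝ) 1) := isCompact_sphere _ _
    haveI : Nontrivial (Fin k → ℝ) := ⟨0, Function.const _ 1, by
      intro h
      have := congrFun h ⟨0, hk⟩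
      simp [Function.const] at this⟩
    have hne : (Metric.sphere (0 : Fin k → ℝ) 1).Nonempty :=
      NormedSpace.sphere_nonempty.mpr zero_le_one
    obtain ⟨u, hu, hmin⟩ := hsph.exists_isMinOn hne (remF_cont k ρ hρ1.le).continuousOn
    have hu1 : ‖u‖ = 1 := mem_sphere_zero_iff_norm.mp hu
    have hune : u ≠ 0 := by
      intro h; rw [h] at hu1; simp at hu1
    have hm : 0 < remF k ρ u := remF_pos k ρ hρ0 hρ1.le hune
    set m := remF k ρ u with hmdef
    refine ⟨k / m, by positivity, ?_⟩
    intro A hsub hmeas hvol Q hdeg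
    by_cases hQ : Q = 0
    · simp [hQ]
    · have hnat : Q.natDegree < k := (Polynomial.natDegree_lt_iff_degree_lt hQ).mpr hdeg
      set v : Fin k → ℝ := fun i => Q.coeff (i : ℕ) with hvdef
      have hveq : ∀ t, Q.eval t = remP k v t := by
        intro t
        rw [Polynomial.eval_eq_sum_range' hnat]
        unfold remP
        exact (Fin.sum_univ_eq_sum_range (fun i => Q.coeff i * t ^ i) k).symm
      have hv : v ≠ 0 := by
        intro h0
        apply Polynomial.leadingCoeff_ne_zero.mpr hQ
        have h1 : v ⟨Q.natDegree, hnat⟩ = 0 := by rw [h0]; rfl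
        exact h1
      have hvn : (0:ℝ) < ‖v‖ := norm_pos_iff.mpr hv
      set u' : Fin k → ℝ := ‖v‖⁻¹ • v with hu'def
      have hu' : u' ∈ Metric.sphere (0 : Fin k → ℝ) 1 := by
        rw [mem_sphere_zero_iff_norm, hu'def, norm_smul]
        simp [Real.norm_eq_abs, abs_of_pos (inv_pos.mpr hvn), inv_mul_cancel₀ hvn.ne']
      have hscale : ∀ t, remP k v t = ‖v‖ * remP k u' t := by
        intro t
        simp only [remP, hu'def, Pi.smul_apply, smul_eq_mul, Finset.mul_sum]
        refine Finset.sum_congr rfl fun i _ => ?_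
        field_simp
      have hAdm : remAdm ρ A := ⟨hmeas, hsub, hvol⟩
      -- upper bound on the full integral
      have h1 : ∫ t in Set.Icc (0:ℝ) 1, |Q.eval t| ≤ k * ‖v‖ := by
        have hb : ∀ t ∈ Set.Icc (0:ℝ) 1, ‖|Q.eval t|‖ ≤ k * ‖v‖ := by
          intro t ht
          rw [Real.norm_eq_abs, abs_abs, hveq]
          exact remP_bound k v ht
        have := norm_setIntegral_le_of_norm_le_const (μ := volume)
          (s := Set.Icc (0:ℝ) 1) (f := fun t => |Q.eval t|)
          (by rw [Real.volume_Icc]; simp) hb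
        rw [measureReal_def, Real.volume_Icc] at this
        simp only [sub_zero, ENNReal.ofReal_one, ENNReal.toReal_one, mul_one] at this
        calc ∫ t in Set.Icc (0:ℝ) 1, |Q.eval t|
            ≤ ‖∫ t in Set.Icc (0:ℝ) 1, |Q.eval t|‖ := le_abs_self _
          _ ≤ k * ‖v‖ := this
      -- lower bound on the integral over A
      have h2 : ‖v‖ * m ≤ ∫ t in A, |Q.eval t| := by
        have heq : ∫ t in A, |Q.eval t| = ‖v‖ * ∫ t in A, |remP k u' t| := by
          rw [← integral_const_mul]
          refine setIntegral_congr_fun hmeas fun t _ => ?_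
          rw [hveq t, hscale t, abs_mul, abs_of_pos hvn]
        rw [heq]
        have hmu : m ≤ ∫ t in A, |remP k u' t| :=
          le_trans (isMinOn_iff.mp hmin u' hu') (remF_le k ρ u' hAdm)
        exact mul_le_mul_of_nonneg_left hmu hvn.le
      have hkm : (k : ℝ) / m * (‖v‖ * m) = k * ‖v‖ := by
        field_simp
      calc ∫ t in Set.Icc (0:ℝ) 1, |Q.eval t| ≤ k * ‖v‖ := h1
        _ = (k : ℝ) / m * (‖v‖ * m) := hkm.symm
        _ ≤ (k : ℝ) / m * ∫ t in A, |Q.eval t| :=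
            mul_le_mul_of_nonneg_left h2 (by positivity)

/-- Remez-type inequality, integral version. -/
theorem remez_integral_bound (k : ℕ) (ρ : ℝ) (hρ0 : 0 < ρ) (hρ1 : ρ < 1) :
    ∃ c : ℝ, 0 < c ∧ ∀ (a b : ℝ), a < b → ∀ A : Set ℝ, A ⊆ Set.Icc a b →
      MeasurableSet A → ENNReal.ofReal (ρ * (b - a)) ≤ volume A →
      ∀ Q : Polynomial ℝ,
        Q.degree < k →
        ∫ t in Set.Icc a b, |Q.eval t| ≤ c * ∫ t in A, |Q.eval t| := by
  obtain ⟨c, hc, hcore⟩ := remez_unit k ρ hρ0 hρ1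
  refine ⟨c, hc, ?_⟩
  intro a b hab A hAsub hAmeas hAvol Q hdeg
  set L : ℝ := b - a with hLdef
  have hL0 : 0 < L := sub_pos.mpr hab
  set φ : ℝ → ℝ := fun s => L * s + a with hφdef
  have hφmeas : Measurable φ := (measurable_id.const_mul L).add_const a
  have hmap : Measure.map φ volume = ENNReal.ofReal L⁻¹ • volume := by
    have hco : φ = (fun y => y + a) ∘ (fun x => L * x) := rfl
    rw [hco, ← Measure.map_map (measurable_add_const a) (measurable_const_mul L),
      Real.map_volume_mul_left hL0.ne', Measure.map_smul, map_add_right_eq_self volume a,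
      abs_of_pos (inv_pos.mpr hL0)]
  have cov : ∀ B : Set ℝ, MeasurableSet B →
      ∫ t in B, |Q.eval t| = L * ∫ s in φ ⁻¹' B, |Q.eval (φ s)| := by
    intro B hB
    have h1 : ∫ s in φ ⁻¹' B, |Q.eval (φ s)|
        = ∫ t in B, |Q.eval t| ∂(Measure.map φ volume) :=
      (setIntegral_map hB ((Polynomial.continuous Q).abs.aestronglyMeasurable)
        hφmeas.aemeasurable).symm
    rw [h1, hmap, Measure.restrict_smul, integral_smul_measure,
      ENNReal.toReal_ofReal (inv_nonneg.mpr hL0.le), smul_eq_mul, ← mul_assoc,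
      mul_inv_cancel₀ hL0.ne', one_mul]
  have hIccpre : φ ⁻¹' Set.Icc a b = Set.Icc 0 1 := by
    ext s
    simp only [Set.mem_preimage, Set.mem_Icc, hφdef]
    constructor
    · rintro ⟨h1, h2⟩
      constructor <;> nlinarith
    · rintro ⟨h1, h2⟩
      constructor <;> nlinarith
  have hA'sub : φ ⁻¹' A ⊆ Set.Icc 0 1 := by
    rw [← hIccpre]; exact Set.preimage_mono hAsub
  have hA'meas : MeasurableSet (φ ⁻¹' A) := hAmeas.preimage hφmeas
  have hA'vol : ENNReal.ofReal ρ ≤ volume (φ ⁻¹' A) := by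
    have hco : φ ⁻¹' A = (fun x => L * x) ⁻¹' ((fun y => y + a) ⁻¹' A) := rfl
    rw [hco, Real.volume_preimage_mul_left hL0.ne', measure_preimage_add_right]
    have hval : ENNReal.ofReal ρ = ENNReal.ofReal |L⁻¹| * ENNReal.ofReal (ρ * L) := by
      rw [← ENNReal.ofReal_mul (abs_nonneg _), abs_of_pos (inv_pos.mpr hL0)]
      congr 1
      field_simp
    rw [hval]
    exact mul_le_mul_right hAvol _
  set Q' : Polynomial ℝ := Q.comp (Polynomial.C L * Polynomial.X + Polynomial.C a) with hQ'def
  have hQ'eval : ∀ s, Q'.eval s = Q.eval (φ s) := by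
    intro s
    simp [hQ'def, Polynomial.eval_comp, hφdef]
  have hQ'deg : Q'.degree < k := by
    rcases eq_or_ne Q' 0 with h | h
    · rw [h, Polynomial.degree_zero]
      exact_mod_cast WithBot.bot_lt_coe k
    · have hQ0 : Q ≠ 0 := by
        rintro rfl
        simp [hQ'def] at h
      have hnatQ : Q.natDegree < k := (Polynomial.natDegree_lt_iff_degree_lt hQ0).mpr hdeg
      have hnat' : Q'.natDegree < k := by
        rw [hQ'def, Polynomial.natDegree_comp, Polynomial.natDegree_linear hL0.ne', mul_one]
        exact hnatQ
      exact (Polynomial.natDegree_lt_iff_degree_lt h).mp hnat'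
  calc ∫ t in Set.Icc a b, |Q.eval t|
      = L * ∫ s in Set.Icc (0:ℝ) 1, |Q'.eval s| := by
        rw [cov _ measurableSet_Icc, hIccpre]
        simp_rw [hQ'eval]
    _ ≤ L * (c * ∫ s in φ ⁻¹' A, |Q'.eval s|) := by
        refine mul_le_mul_of_nonneg_left ?_ hL0.le
        exact hcore _ hA'sub hA'meas hA'vol Q' hQ'deg
    _ = c * ∫ t in A, |Q.eval t| := by
        rw [cov A hAmeas]
        simp_rw [hQ'eval]
        ring
end

section
/- Let V be a bounded open interval and f an integrable function on V satisfying ∫_V |f(t)| dt ≤ λ·|V| for some λ > 0. Let T_V f denote the orthogonal projection (in L²(V)) of f onto the space of polynomials of degree at most k-1 on V. Then ‖T_V f‖²_{L²(V)} ≤ C·λ²·|V|, where C depends only on k. -/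
open MeasureTheory

lemma ioo01_eq (g : ℝ → ℝ) : ∫ x in Set.Ioo (0:ℝ) 1, g x = ∫ x in (0:ℝ)..1, g x := by
  rw [intervalIntegral.integral_of_le zero_le_one, integral_Ioc_eq_integral_Ioo]

lemma sq_int_eq (k : ℕ) (c : Fin k → ℝ) :
    ∫ x in Set.Ioo (0:ℝ) 1, (∑ i, c i * x ^ (i:ℕ))^2
      = ∑ i : Fin k, ∑ j : Fin k, c i * c j / ((i:ℕ) + (j:ℕ) + 1) := by
  rw [ioo01_eq]
  have h1 : ∀ x : ℝ, (∑ i, c i * x ^ (i:ℕ))^2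
      = ∑ i : Fin k, ∑ j : Fin k, (c i * c j) * x ^ ((i:ℕ) + (j:ℕ)) := by
    intro x
    rw [sq, Finset.sum_mul_sum]
    congr 1; ext i; congr 1; ext j; rw [pow_add]; ring
  simp only [h1]
  rw [intervalIntegral.integral_finset_sum]
  · refine Finset.sum_congr rfl fun i _ => ?_
    rw [intervalIntegral.integral_finset_sum]
    · refine Finset.sum_congr rfl fun j _ => ?_
      rw [intervalIntegral.integral_const_mul, integral_pow]
      push_cast
      simp
      rw [div_eq_mul_inv]
    · intro j _
      exact (continuous_const.mul (continuous_pow _)).intervalIntegrable _ _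
  · intro i _
    exact (continuous_finset_sum _ fun j _ =>
      continuous_const.mul (continuous_pow _)).intervalIntegrable _ _

lemma contInt (g : ℝ → ℝ) (hg : Continuous g) (a b : ℝ) :
    IntegrableOn g (Set.Ioo a b) := by
  exact (hg.integrableOn_Icc).mono_set Set.Ioo_subset_Icc_self

lemma poly_sq_pos (k : ℕ) (c : Fin k → ℝ) (hc : c ≠ 0) :
    0 < ∫ x in Set.Ioo (0:ℝ) 1, (∑ i, c i * x ^ (i:ℕ))^2 := by
  classical
  set R : Polynomial ℝ := ∑ i : Fin k, Polynomial.C (c i) * Polynomial.X ^ (i:ℕ) with hR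
  have hev : ∀ x : ℝ, R.eval x = ∑ i, c i * x ^ (i:ℕ) := by
    intro x; simp [hR, Polynomial.eval_finset_sum]
  have hcoeff : ∀ i : Fin k, R.coeff i = c i := by
    intro i
    rw [hR, Polynomial.finset_sum_coeff]
    rw [Finset.sum_eq_single i]
    · simp
    · intro j _ hj
      simp only [Polynomial.coeff_C_mul, Polynomial.coeff_X_pow]
      rw [if_neg (by simpa [Fin.val_eq_val, eq_comm] using hj)]
      ring
    · simp
  have hR0 : R ≠ 0 := by
    intro h
    apply hc
    funext i
    rw [← hcoeff i, h]
    simp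
  have hint : IntegrableOn (fun x => (∑ i, c i * x ^ (i:ℕ))^2) (Set.Ioo (0:ℝ) 1) :=
    contInt _ ((continuous_finset_sum _ fun i _ =>
      continuous_const.mul (continuous_pow _)).pow 2) 0 1
  rw [setIntegral_pos_iff_support_of_nonneg_ae
    (by filter_upwards with x using sq_nonneg _) hint]
  have hroots : ({x : ℝ | (∑ i, c i * x ^ (i:ℕ))^2 = 0} : Set ℝ) ⊆ ↑R.roots.toFinset := by
    intro x hx
    have hx0 : (∑ i, c i * x ^ (i:ℕ)) = 0 := sq_eq_zero_iff.mp hx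
    simp only [Finset.mem_coe, Multiset.mem_toFinset]
    rw [Polynomial.mem_roots hR0]
    rw [Polynomial.IsRoot, hev]
    exact hx0
  have hz : volume ({x : ℝ | (∑ i, c i * x ^ (i:ℕ))^2 = 0} : Set ℝ) = 0 :=
    measure_mono_null hroots ((R.roots.toFinset : Finset ℝ).finite_toSet.measure_zero _)
  have hsub : Set.Ioo (0:ℝ) 1 ⊆
      (Function.support (fun x => (∑ i, c i * x ^ (i:ℕ))^2) ∩ Set.Ioo 0 1) ∪
      {x : ℝ | (∑ i, c i * x ^ (i:ℕ))^2 = 0} := by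
    intro x hx
    by_cases h : (∑ i, c i * x ^ (i:ℕ))^2 = 0
    · exact Or.inr h
    · exact Or.inl ⟨h, hx⟩
  have h1 : volume (Set.Ioo (0:ℝ) 1) ≤
      volume (Function.support (fun x => (∑ i, c i * x ^ (i:ℕ))^2) ∩ Set.Ioo 0 1) :=
    le_trans (measure_mono hsub) (le_trans (measure_union_le _ _) (by rw [hz, add_zero]))
  calc (0:ENNReal) < volume (Set.Ioo (0:ℝ) 1) := by simp [Real.volume_Ioo]
  _ ≤ _ := h1

lemma coercive (k : ℕ) (hk : 0 < k) : ∃ μ : ℝ, 0 < μ ∧ ∀ c : Fin k → ℝ,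
    μ * (∑ i, (c i)^2) ≤ ∫ x in Set.Ioo (0:ℝ) 1, (∑ i, c i * x ^ (i:ℕ))^2 := by
  classical
  set g : (Fin k → ℝ) → ℝ :=
    fun c => ∑ i : Fin k, ∑ j : Fin k, c i * c j / ((i:ℕ) + (j:ℕ) + 1) with hg
  have hgc : Continuous g := by
    apply continuous_finset_sum; intro i _
    apply continuous_finset_sum; intro j _
    exact ((continuous_apply i).mul (continuous_apply j)).div_const _
  set S : Set (Fin k → ℝ) := {c | ∑ i, (c i)^2 = 1} with hS
  have hScl : IsClosed S := isClosed_eq (by continuity) continuous_const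
  have hSbdd : Bornology.IsBounded S := by
    rw [Metric.isBounded_iff_subset_closedBall 0]
    refine ⟨1, fun c hc => ?_⟩
    rw [Metric.mem_closedBall, dist_zero_right]
    rw [pi_norm_le_iff_of_nonneg zero_le_one]
    intro i
    rw [Real.norm_eq_abs, ← Real.sqrt_one, ← Real.sqrt_sq_eq_abs]
    apply Real.sqrt_le_sqrt
    rw [← hc]
    exact Finset.single_le_sum (fun j _ => sq_nonneg (c j)) (Finset.mem_univ i)
  have hScmp : IsCompact S := Metric.isCompact_of_isClosed_isBounded hScl hSbdd
  have hSne : S.Nonempty := by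
    refine ⟨fun i => if i = ⟨0, hk⟩ then 1 else 0, ?_⟩
    simp only [hS, Set.mem_setOf_eq]
    rw [Finset.sum_eq_single ⟨0, hk⟩] <;> simp +contextual
  obtain ⟨c₀, hc₀S, hmin⟩ := hScmp.exists_isMinOn hSne hgc.continuousOn
  have hglue : ∀ c : Fin k → ℝ,
      g c = ∫ x in Set.Ioo (0:ℝ) 1, (∑ i, c i * x ^ (i:ℕ))^2 := fun c => (sq_int_eq k c).symm
  have hc₀ne : c₀ ≠ 0 := by
    intro h
    have := hc₀S
    rw [hS, Set.mem_setOf_eq, h] at this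
    simp at this
  have hμ : 0 < g c₀ := by rw [hglue]; exact poly_sq_pos k c₀ hc₀ne
  refine ⟨g c₀, hμ, fun c => ?_⟩
  rw [← hglue]
  by_cases hc : c = 0
  · simp [hc, hg]
  · have hsum : 0 < ∑ i, (c i)^2 := by
      have : ∃ i, c i ≠ 0 := by
        by_contra h; push_neg at h; exact hc (funext h)
      obtain ⟨i, hi⟩ := this
      apply Finset.sum_pos' (fun j _ => sq_nonneg _) ⟨i, Finset.mem_univ i, by positivity⟩
    set r : ℝ := Real.sqrt (∑ i, (c i)^2) with hr
    have hrpos : 0 < r := Real.sqrt_pos.mpr hsum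
    have hrsq : r ^ 2 = ∑ i, (c i)^2 := Real.sq_sqrt hsum.le
    have hmem : (fun i => c i / r) ∈ S := by
      simp only [hS, Set.mem_setOf_eq, div_pow]
      rw [← Finset.sum_div, ← hrsq, div_self (by positivity)]
    have h1 : g c₀ ≤ g (fun i => c i / r) := hmin hmem
    have h2 : g (fun i => c i / r) = g c / r ^ 2 := by
      simp only [hg, Finset.sum_div]
      refine Finset.sum_congr rfl fun i _ => ?_
      refine Finset.sum_congr rfl fun j _ => ?_
      rw [div_mul_div_comm, ← sq, div_right_comm]
    rw [h2] at h1
    rw [← hrsq]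
    calc g c₀ * r ^ 2 ≤ (g c / r ^ 2) * r ^ 2 :=
      mul_le_mul_of_nonneg_right h1 (by positivity)
    _ = g c := by field_simp

lemma iooInt (g : ℝ → ℝ) (a b : ℝ) (hab : a ≤ b) :
    ∫ x in Set.Ioo a b, g x = ∫ x in a..b, g x := by
  rw [intervalIntegral.integral_of_le hab, integral_Ioc_eq_integral_Ioo]

/-- If `∫_V |f| ≤ λ|V|`, then the L²(V)-orthogonal projection `P` of `f` onto
polynomials of degree `< k` satisfies `‖P‖²_{L²(V)} ≤ C λ² |V|`.
The projection is characterized by the orthogonality relations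
`∫_V (f - P) Q = 0` for all polynomials `Q` of degree `< k`. -/
theorem polynomial_projection_L2_bound (k : ℕ) :
    ∃ C : ℝ, 0 < C ∧ ∀ (a b : ℝ), a < b → ∀ (f : ℝ → ℝ) (lam : ℝ), 0 < lam →
      IntegrableOn f (Set.Ioo a b) →
      (∫ t in Set.Ioo a b, |f t|) ≤ lam * (b - a) →
      ∀ P : Polynomial ℝ, P.degree < k →
        (∀ Q : Polynomial ℝ, Q.degree < k →
          ∫ t in Set.Ioo a b, (f t - P.eval t) * Q.eval t = 0) →
        (∫ t in Set.Ioo a b, (P.eval t) ^ 2) ≤ C * lam ^ 2 * (b - a) := by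
  classical
  rcases Nat.eq_zero_or_pos k with hk | hk
  · subst hk
    refine ⟨1, one_pos, fun a b hab f lam hlam _ _ P hPdeg _ => ?_⟩
    have hP0 : P = 0 := by
      refine Polynomial.degree_eq_bot.mp ?_
      rw [← Nat.WithBot.lt_zero_iff]
      simpa using hPdeg
    have hL : 0 < b - a := sub_pos.mpr hab
    rw [hP0]
    simp only [Polynomial.eval_zero]
    rw [zero_pow two_ne_zero, integral_zero]
    positivity
  · obtain ⟨μ, hμ, hco⟩ := coercive k hk
    refine ⟨k / μ, by positivity, fun a b hab f lam hlam hfint hfb P hPdeg horth => ?_⟩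
    have hL : 0 < b - a := sub_pos.mpr hab
    set Q : Polynomial ℝ := P.comp (Polynomial.C a + Polynomial.C (b - a) * Polynomial.X)
      with hQ
    have hQdeg : Q.natDegree < k := by
      rw [hQ, Polynomial.natDegree_comp]
      have h1 : (Polynomial.C a + Polynomial.C (b - a) * Polynomial.X).natDegree = 1 := by
        rw [add_comm]
        exact Polynomial.natDegree_linear hL.ne'
      rw [h1, mul_one]
      by_cases hP0 : P = 0
      · rw [hP0]; simpa using hk
      · exact (Polynomial.natDegree_lt_iff_degree_lt hP0).mpr hPdeg
    set q : Fin k → ℝ := fun i => Q.coeff i with hq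
    have hQev : ∀ x : ℝ, Q.eval x = ∑ i : Fin k, q i * x ^ (i : ℕ) := by
      intro x
      rw [Polynomial.eval_eq_sum_range' hQdeg x,
        ← Fin.sum_univ_eq_sum_range (fun i => Q.coeff i * x ^ i) k]
    have hPev : ∀ t : ℝ, P.eval t = Q.eval ((t - a) / (b - a)) := by
      intro t
      rw [hQ, Polynomial.eval_comp]
      simp only [Polynomial.eval_add, Polynomial.eval_mul, Polynomial.eval_C,
        Polynomial.eval_X]
      congr 1
      field_simp
      ring
    set Sb : ℝ := ∑ i : Fin k, |q i| with hSb
    have hSb0 : 0 ≤ Sb := Finset.sum_nonneg fun i _ => abs_nonneg _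
    have hbd : ∀ t ∈ Set.Ioo a b, |P.eval t| ≤ Sb := by
      intro t ht
      rw [hPev t, hQev]
      have hy0 : 0 ≤ (t - a) / (b - a) := div_nonneg (by linarith [ht.1]) hL.le
      have hy1 : (t - a) / (b - a) ≤ 1 := by
        rw [div_le_one hL]; linarith [ht.2]
      calc |∑ i : Fin k, q i * ((t - a) / (b - a)) ^ (i : ℕ)|
          ≤ ∑ i : Fin k, |q i * ((t - a) / (b - a)) ^ (i : ℕ)| :=
            Finset.abs_sum_le_sum_abs _ _
        _ ≤ Sb := Finset.sum_le_sum fun i _ => by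
            rw [abs_mul, abs_pow, abs_of_nonneg hy0]
            exact mul_le_of_le_one_right (abs_nonneg _) (pow_le_one₀ hy0 hy1)
    have hPcont : Continuous fun t : ℝ => P.eval t := P.continuous
    have hPP : IntegrableOn (fun t => (P.eval t) ^ 2) (Set.Ioo a b) :=
      contInt _ (hPcont.pow 2) a b
    have hfP : IntegrableOn (fun t => P.eval t * f t) (Set.Ioo a b) := by
      refine Integrable.bdd_mul (c := Sb) hfint hPcont.aestronglyMeasurable ?_
      filter_upwards [ae_restrict_mem measurableSet_Ioo] with t ht
      rw [Real.norm_eq_abs]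
      exact hbd t ht
    have key : (∫ t in Set.Ioo a b, (P.eval t) ^ 2)
        = ∫ t in Set.Ioo a b, P.eval t * f t := by
      have h0 := horth P hPdeg
      have hrw : ∀ t : ℝ, (f t - P.eval t) * P.eval t
          = P.eval t * f t - (P.eval t) ^ 2 := fun t => by ring
      simp only [hrw] at h0
      rw [integral_sub hfP hPP] at h0
      linarith
    have hIle : (∫ t in Set.Ioo a b, (P.eval t) ^ 2) ≤ Sb * (lam * (b - a)) := by
      rw [key]
      calc (∫ t in Set.Ioo a b, P.eval t * f t)
          ≤ ∫ t in Set.Ioo a b, Sb * |f t| := by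
            refine setIntegral_mono_on hfP (hfint.abs.const_mul Sb) measurableSet_Ioo
              fun t ht => ?_
            calc P.eval t * f t ≤ |P.eval t * f t| := le_abs_self _
              _ = |P.eval t| * |f t| := abs_mul _ _
              _ ≤ Sb * |f t| := mul_le_mul_of_nonneg_right (hbd t ht) (abs_nonneg _)
        _ = Sb * ∫ t in Set.Ioo a b, |f t| := integral_const_mul _ _
        _ ≤ Sb * (lam * (b - a)) := mul_le_mul_of_nonneg_left hfb hSb0
    have hscale : (∫ t in Set.Ioo a b, (P.eval t) ^ 2)
        = (b - a) * ∫ x in Set.Ioo (0 : ℝ) 1, (Q.eval x) ^ 2 := by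
      have hrw : ∀ t : ℝ, (P.eval t) ^ 2
          = (fun x => (Q.eval x) ^ 2) ((b - a)⁻¹ * t + (-a * (b - a)⁻¹)) := by
        intro t
        rw [hPev t]
        congr 2
        field_simp
        ring
      rw [iooInt _ a b hab.le, iooInt _ 0 1 zero_le_one]
      simp only [hrw]
      rw [intervalIntegral.integral_comp_mul_add (fun x => (Q.eval x) ^ 2)
        (inv_ne_zero hL.ne') (-a * (b - a)⁻¹)]
      have e1 : (b - a)⁻¹ * a + (-a * (b - a)⁻¹) = 0 := by ring
      have e2 : (b - a)⁻¹ * b + (-a * (b - a)⁻¹) = 1 := by field_simp; ring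
      rw [e1, e2, smul_eq_mul, inv_inv]
    have hcoQ : μ * (∑ i : Fin k, (q i) ^ 2) ≤ ∫ x in Set.Ioo (0 : ℝ) 1, (Q.eval x) ^ 2 := by
      simp only [hQev]
      exact hco q
    have hCS : Sb ^ 2 ≤ (k : ℝ) * ∑ i : Fin k, (q i) ^ 2 := by
      have h := sq_sum_le_card_mul_sum_sq (s := (Finset.univ : Finset (Fin k)))
        (f := fun i => |q i|)
      simpa [sq_abs] using h
    set I : ℝ := ∫ t in Set.Ioo a b, (P.eval t) ^ 2 with hI
    have hInn : 0 ≤ I := setIntegral_nonneg measurableSet_Ioo fun t _ => sq_nonneg _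
    rcases eq_or_lt_of_le hInn with h0 | hpos
    · rw [← h0]; positivity
    · have hq2 : Sb ^ 2 * ((b - a) * μ) ≤ (k : ℝ) * I := by
        have h1 : μ * (∑ i : Fin k, (q i) ^ 2) ≤ I / (b - a) := by
          rw [hscale, mul_comm (b - a), mul_div_assoc, div_self hL.ne', mul_one]
          exact hcoQ
        have hk0 : (0:ℝ) < k := by exact_mod_cast hk
        calc Sb ^ 2 * ((b - a) * μ) ≤ ((k : ℝ) * ∑ i : Fin k, (q i) ^ 2) * ((b - a) * μ) :=
            mul_le_mul_of_nonneg_right hCS (by positivity)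
          _ = (k : ℝ) * ((b - a) * (μ * ∑ i : Fin k, (q i) ^ 2)) := by ring
          _ ≤ (k : ℝ) * ((b - a) * (I / (b - a))) := by
            refine mul_le_mul_of_nonneg_left (mul_le_mul_of_nonneg_left h1 hL.le) hk0.le
          _ = (k : ℝ) * I := by field_simp
      -- conclude μ * I ≤ k * lam^2 * (b-a), then divide
      have hmain : μ * I ≤ (k : ℝ) * lam ^ 2 * (b - a) := by
        have hsq : I * I ≤ (Sb * (lam * (b - a))) * (Sb * (lam * (b - a))) :=
          mul_self_le_mul_self hInn hIle
        have hA : μ ^ 2 * (I * I)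
            ≤ μ ^ 2 * ((Sb * (lam * (b - a))) * (Sb * (lam * (b - a)))) :=
          mul_le_mul_of_nonneg_left hsq (sq_nonneg μ)
        have hB : (lam ^ 2 * (b - a) * μ) * (Sb ^ 2 * ((b - a) * μ))
            ≤ (lam ^ 2 * (b - a) * μ) * ((k : ℝ) * I) :=
          mul_le_mul_of_nonneg_left hq2 (by positivity)
        have hI2 : (μ * I) * (μ * I) ≤ ((k : ℝ) * lam ^ 2 * (b - a)) * (μ * I) := by
          calc (μ * I) * (μ * I) = μ ^ 2 * (I * I) := by ring
            _ ≤ μ ^ 2 * ((Sb * (lam * (b - a))) * (Sb * (lam * (b - a)))) := hA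
            _ = (lam ^ 2 * (b - a) * μ) * (Sb ^ 2 * ((b - a) * μ)) := by ring
            _ ≤ (lam ^ 2 * (b - a) * μ) * ((k : ℝ) * I) := hB
            _ = ((k : ℝ) * lam ^ 2 * (b - a)) * (μ * I) := by ring
        exact le_of_mul_le_mul_right hI2 (mul_pos hμ hpos)
      rw [div_mul_eq_mul_div, div_mul_eq_mul_div, le_div_iff₀ hμ]
      calc I * μ = μ * I := by ring
        _ ≤ (k : ℝ) * lam ^ 2 * (b - a) := hmain
end
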